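/- Let k be a positive integer and r > 0, and let P_1,…,P_k be the steps of a (k,r)-staircase. Suppose x ∈ ℝ^2 and x_1,…,x_m are distinct points (all distinct from x) such that exactly k of the points x_1,…,x_m lie in the closed square x + [−r,r]^2 and each translated step x + P_j contains exactly one of these k points in its interior. Then in the (π/2)-Yao graph of the point set {x, x_1,…,x_m} the degree of x is at least k. -/
import Mathlib


open MeasureTheory Filter

noncomputable section

/-- The Euclidean plane. -/
abbrev E2 := EuclideanSpace ℝ (Fin 2)

/-- `w` lies in the `q`-th cone of `u`: the angle of `w - u`, measured counterclockwise
from the positive x-direction, lies in `[qπ/2, (q+1)π/2)`.  We express this condition on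
each quadrant directly by sign conditions on the coordinates of `w - u`. -/
def inCone (u w : E2) (q : Fin 4) : Prop :=
  (q = 0 ∧ 0 < w 0 - u 0 ∧ 0 ≤ w 1 - u 1) ∨
  (q = 1 ∧ w 0 - u 0 ≤ 0 ∧ 0 < w 1 - u 1) ∨
  (q = 2 ∧ w 0 - u 0 < 0 ∧ w 1 - u 1 ≤ 0) ∨
  (q = 3 ∧ 0 ≤ w 0 - u 0 ∧ w 1 - u 1 < 0)

/-- `X j` is chosen by `X i` in the `(π/2)`-Yao graph: for some cone of `X i` containing
`X j`, no point of the set lying in that cone is strictly closer to `X i` than `X j`. -/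
def yaoDir {n : ℕ} (X : Fin n → E2) (i j : Fin n) : Prop :=
  ∃ q : Fin 4, inCone (X i) (X j) q ∧
    ∀ k : Fin n, inCone (X i) (X k) q → dist (X i) (X j) ≤ dist (X i) (X k)

/-- Undirected adjacency in the `(π/2)`-Yao graph. -/
def yaoAdj {n : ℕ} (X : Fin n → E2) (i j : Fin n) : Prop :=
  yaoDir X i j ∨ yaoDir X j i

/-- Degree of vertex `i` in the `(π/2)`-Yao graph of the points `X`. -/
def yaoDeg {n : ℕ} (X : Fin n → E2) (i : Fin n) : ℕ :=
  Nat.card {j : Fin n // yaoAdj X i j}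

/-- Maximal degree of the `(π/2)`-Yao graph of the points `X`. -/
def yaoMaxDeg {n : ℕ} (X : Fin n → E2) : ℕ :=
  Finset.univ.sup (yaoDeg X)

/-- The `j`-th step of a `(k,r)`-staircase (for `j = 1, …, k`):
`P_j = [(j−1)r/k, jr/k] × [r − jr/k, r − (j−1)r/k]`. -/
def step (k : ℕ) (r : ℝ) (j : ℝ) : Set E2 :=
  {z | z 0 ∈ Set.Icc ((j - 1) * r / k) (j * r / k) ∧
       z 1 ∈ Set.Icc (r - j * r / k) (r - (j - 1) * r / k)}

/-- The closed square `[−r, r]^2`. -/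
def closedSquare (r : ℝ) : Set E2 :=
  {z | z 0 ∈ Set.Icc (-r) r ∧ z 1 ∈ Set.Icc (-r) r}

/-- Distance formula in coordinates. -/
lemma E2.dist_eq' (u w : E2) :
    dist u w = Real.sqrt ((u 0 - w 0)^2 + (u 1 - w 1)^2) := by
  rw [EuclideanSpace.dist_eq, Fin.sum_univ_two, Real.dist_eq, Real.dist_eq, sq_abs, sq_abs]

/-- Points in the interior of a step satisfy strict coordinate inequalities. -/
lemma interior_step_mem {k : ℕ} {r j : ℝ} {z : E2} (hz : z ∈ interior (step k r j)) :
    (j - 1) * r / k < z 0 ∧ z 0 < j * r / k ∧ r - j * r / k < z 1 ∧ z 1 < r - (j - 1) * r / k := by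
  rw [mem_interior_iff_mem_nhds, Metric.mem_nhds_iff] at hz
  obtain ⟨ε, hε, hball⟩ := hz
  have key : ∀ (i : Fin 2) (c : ℝ), |c| < ε → z + EuclideanSpace.single i c ∈ step k r j := by
    intro i c hc
    apply hball
    rw [Metric.mem_ball, dist_eq_norm, add_sub_cancel_left, EuclideanSpace.norm_single,
      Real.norm_eq_abs]
    exact hc
  have habs : |ε/2| < ε := by rw [abs_of_pos (by linarith)]; linarith
  have habs' : |-(ε/2)| < ε := by rwa [abs_neg]
  have h00 := key 0 (ε/2) habs
  have h01 := key 0 (-(ε/2)) habs'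
  have h10 := key 1 (ε/2) habs
  have h11 := key 1 (-(ε/2)) habs'
  simp only [step, Set.mem_setOf_eq, Set.mem_Icc, PiLp.add_apply,
    EuclideanSpace.single_apply] at h00 h01 h10 h11
  norm_num at h00 h01 h10 h11
  exact ⟨by linarith [h01.1.1], by linarith [h00.1.2], by linarith [h11.2.1], by linarith [h10.2.2]⟩

/-- Suppose `x` and the distinct points `p 0, …, p (m-1)` (all
distinct from `x`) are such that exactly `k` of the points `p i` lie in the closed
square `x + [−r,r]^2`, and each translated step `x + P_j` (`j = 1, …, k`) contains
exactly one of these `k` points in its interior.  Then in the `(π/2)`-Yao graph of the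
point set `{x, p 0, …, p (m-1)}` the degree of `x` is at least `k`. -/
theorem staircase_yao_degree (k m : ℕ) (hk : 0 < k) (r : ℝ) (hr : 0 < r)
    (x : E2) (p : Fin m → E2) (hinj : Function.Injective p) (hx : ∀ i, p i ≠ x)
    (hcount : Nat.card {i : Fin m // p i - x ∈ closedSquare r} = k)
    (hsteps : ∀ j : Fin k, ∃! i : Fin m, p i - x ∈ interior (step k r ((j : ℝ) + 1))) :
    k ≤ yaoDeg (Fin.cons x p) 0 := by
  classical
  have hk' : (0:ℝ) < (k:ℝ) := by exact_mod_cast hk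
  simp only [ExistsUnique] at hsteps
  choose f hf _hu using hsteps
  -- coordinate bounds of step points
  have bnds : ∀ j : Fin k,
      (j:ℝ) * r / k < p (f j) 0 - x 0 ∧ p (f j) 0 - x 0 < ((j:ℝ)+1) * r / k ∧
      r - ((j:ℝ)+1) * r / k < p (f j) 1 - x 1 ∧ p (f j) 1 - x 1 < r - (j:ℝ) * r / k := by
    intro j
    have h := interior_step_mem (hf j)
    have e : ((j:ℝ)+1) - 1 = (j:ℝ) := by ring
    rw [e] at h
    simpa only [PiLp.sub_apply] using h
  have hcast : ∀ j : Fin k, ((j:ℝ)+1) ≤ (k:ℝ) := by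
    intro j; exact_mod_cast j.isLt
  have hmul : ∀ c d : ℝ, c ≤ d → c * r / k ≤ d * r / k := by
    intro c d h
    gcongr
  have hjk : ∀ j : Fin k, ((j:ℝ)+1) * r / k ≤ r := by
    intro j
    have h1 := hmul _ _ (hcast j)
    have h2 : (k:ℝ) * r / k = r := by field_simp
    linarith
  have hj0 : ∀ j : Fin k, 0 ≤ (j:ℝ) * r / k := by
    intro j; positivity
  have ha : ∀ j : Fin k, 0 < p (f j) 0 - x 0 := fun j =>
    lt_of_le_of_lt (hj0 j) (bnds j).1
  have haR : ∀ j : Fin k, p (f j) 0 - x 0 < r := fun j =>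
    lt_of_lt_of_le (bnds j).2.1 (hjk j)
  have hb : ∀ j : Fin k, 0 < p (f j) 1 - x 1 := fun j => by
    have := (bnds j).2.2.1; have := hjk j; linarith
  have hbR : ∀ j : Fin k, p (f j) 1 - x 1 < r := fun j => by
    have := (bnds j).2.2.2; have := hj0 j; linarith
  -- step points lie in the square
  have hfS : ∀ j : Fin k, p (f j) - x ∈ closedSquare r := by
    intro j
    have e0 : (p (f j) - x) 0 = p (f j) 0 - x 0 := rfl
    have e1 : (p (f j) - x) 1 = p (f j) 1 - x 1 := rfl
    exact ⟨⟨by rw [e0]; linarith [ha j], by rw [e0]; linarith [haR j]⟩,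
           ⟨by rw [e1]; linarith [hb j], by rw [e1]; linarith [hbR j]⟩⟩
  -- f is injective
  have hfinj : Function.Injective f := by
    intro j j' h
    by_contra hne
    have hne' : (j:ℕ) ≠ (j':ℕ) := fun hc => hne (Fin.ext hc)
    rcases hne'.lt_or_gt with hlt | hlt
    · have hle : ((j:ℝ)+1) ≤ (j':ℝ) := by exact_mod_cast hlt
      have b1 := (bnds j).2.1
      rw [h] at b1
      have b2 := (bnds j').1
      have := hmul _ _ hle
      linarith
    · have hle : ((j':ℝ)+1) ≤ (j:ℝ) := by exact_mod_cast hlt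
      have b1 := (bnds j').2.1
      rw [← h] at b1
      have b2 := (bnds j).1
      have := hmul _ _ hle
      linarith
  -- every square point is a step point
  haveI : Fintype {i : Fin m // p i - x ∈ closedSquare r} := Fintype.ofFinite _
  have hcard : Fintype.card {i : Fin m // p i - x ∈ closedSquare r} = k := by
    rw [← Nat.card_eq_fintype_card, hcount]
  have hFsurj : Function.Surjective
      (fun j : Fin k => (⟨f j, hfS j⟩ : {i : Fin m // p i - x ∈ closedSquare r})) := by
    have hFinj : Function.Injective
        (fun j : Fin k => (⟨f j, hfS j⟩ : {i : Fin m // p i - x ∈ closedSquare r})) :=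
      fun a b h => hfinj (congrArg Subtype.val h)
    exact ((Fintype.bijective_iff_injective_and_card _).mpr
      ⟨hFinj, by rw [hcard, Fintype.card_fin]⟩).2
  have sq : ∀ i : Fin m, p i - x ∈ closedSquare r → ∃ j, f j = i := by
    intro i hi
    obtain ⟨j, hj⟩ := hFsurj ⟨i, hi⟩
    exact ⟨j, congrArg Subtype.val hj⟩
  -- each step point chooses x in its cone 2
  have hdir : ∀ j : Fin k, yaoDir (Fin.cons x p) (Fin.succ (f j)) 0 := by
    intro j
    refine ⟨2, ?_, ?_⟩
    · simp only [Fin.cons_succ, Fin.cons_zero]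
      exact Or.inr (Or.inr (Or.inl ⟨rfl, by linarith [ha j], by linarith [hb j]⟩))
    · intro l
      refine Fin.cases ?_ ?_ l
      · intro _; exact le_refl _
      · intro i hi
        simp only [Fin.cons_succ, Fin.cons_zero] at hi ⊢
        rcases hi with ⟨hq,_,_⟩ | ⟨hq,_,_⟩ | ⟨_, hw0, hw1⟩ | ⟨hq,_,_⟩
        · exact absurd hq (by decide)
        · exact absurd hq (by decide)
        · by_cases hiS : p i - x ∈ closedSquare r
          · obtain ⟨j', rfl⟩ := sq i hiS
            exfalso
            rcases lt_trichotomy ((j':Fin k):ℕ) ((j:Fin k):ℕ) with hlt | heq | hlt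
            · have hle : ((j':ℝ)+1) ≤ (j:ℝ) := by exact_mod_cast hlt
              have b1 := (bnds j').2.2.1
              have b2 := (bnds j).2.2.2
              have := hmul _ _ hle
              linarith
            · have : j' = j := Fin.ext heq
              subst this
              linarith
            · have hle : ((j:ℝ)+1) ≤ (j':ℝ) := by exact_mod_cast hlt
              have b1 := (bnds j').1
              have b2 := (bnds j).2.1
              have := hmul _ _ hle
              linarith
          · -- p i lies outside the square, so it is far away
            have hsq2 : p i 0 - x 0 < -r ∨ p i 1 - x 1 < -r := by
              by_contra hcon
              push_neg at hcon
              apply hiS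
              have e0 : (p i - x) 0 = p i 0 - x 0 := rfl
              have e1 : (p i - x) 1 = p i 1 - x 1 := rfl
              exact ⟨⟨by rw [e0]; linarith [hcon.1], by rw [e0]; linarith [haR j]⟩,
                     ⟨by rw [e1]; linarith [hcon.2], by rw [e1]; linarith [hbR j]⟩⟩
            rw [E2.dist_eq', E2.dist_eq']
            apply Real.sqrt_le_sqrt
            rcases hsq2 with hA | hB
            · have hc : p (f j) 0 - x 0 + r < p (f j) 0 - p i 0 := by linarith
              have hc2 : (p (f j) 0 - x 0 + r)^2 < (p (f j) 0 - p i 0)^2 := by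
                nlinarith [ha j, hr, hc]
              have hb2 : (p (f j) 1 - x 1)^2 ≤ r^2 := by
                nlinarith [hb j, hbR j]
              nlinarith [sq_nonneg (p (f j) 1 - p i 1), hc2, hb2, mul_pos (ha j) hr]
            · have hc : p (f j) 1 - x 1 + r < p (f j) 1 - p i 1 := by linarith
              have hc2 : (p (f j) 1 - x 1 + r)^2 < (p (f j) 1 - p i 1)^2 := by
                nlinarith [hb j, hr, hc]
              have ha2 : (p (f j) 0 - x 0)^2 ≤ r^2 := by
                nlinarith [ha j, haR j]
              nlinarith [sq_nonneg (p (f j) 0 - p i 0), hc2, ha2, mul_pos (hb j) hr]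
        · exact absurd hq (by decide)
  -- conclude on the degree
  have hg : Function.Injective (fun j : Fin k =>
      (⟨Fin.succ (f j), Or.inr (hdir j)⟩ : {l : Fin (m+1) // yaoAdj (Fin.cons x p) 0 l})) := by
    intro a b h
    exact hfinj (Fin.succ_injective m (congrArg Subtype.val h))
  calc k = Nat.card (Fin k) := by simp
    _ ≤ Nat.card {l : Fin (m+1) // yaoAdj (Fin.cons x p) 0 l} :=
        Nat.card_le_card_of_injective _ hg
    _ = yaoDeg (Fin.cons x p) 0 := rfl
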